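/- The Cauchy determinant identity: det(1/(1 - a_j b_k))_{j,k=1}^n = V(a) · V(b) · ∏_{j,k=1}^n 1/(1 - a_j b_k), where V denotes the Vandermonde determinant. -/

import Mathlib

open Finset Equiv Polynomial

private lemma sign_revPerm' (n : ℕ) :
    Equiv.Perm.sign (Fin.revPerm : Equiv.Perm (Fin n)) = (-1) ^ (∑ i ∈ range n, i) := by
  induction n with
  | zero => simp [Subsingleton.elim (Fin.revPerm : Equiv.Perm (Fin 0)) 1]
  | succ n ih =>
    have key : (Fin.revPerm : Equiv.Perm (Fin (n+1))) =
        finRotate (n+1) * Equiv.Perm.extendDomain Fin.revPerm (finSuccAboveEquiv (Fin.last n)) := by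
      ext i
      refine Fin.lastCases ?_ (fun j => ?_) i
      · rw [Equiv.Perm.mul_apply]
        rw [Equiv.Perm.extendDomain_apply_not_subtype _ _ (by simp)]
        simp [Fin.rev_last]
      · rw [Equiv.Perm.mul_apply]
        have hj : Fin.castSucc j = ((finSuccAboveEquiv (Fin.last n)) j : Fin (n+1)) := by
          simp [finSuccAboveEquiv_apply, Fin.succAbove_last_apply]
        rw [hj, Equiv.Perm.extendDomain_apply_image]
        simp only [finSuccAboveEquiv_apply, Fin.succAbove_last_apply, Fin.revPerm_apply]
        rw [finRotate_succ_apply]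
        have h1 : (Fin.castSucc (Fin.rev j)) + 1 = (Fin.rev j).succ := by
          ext; simp [Fin.val_add_one, Fin.ext_iff]
        rw [h1, ← Fin.rev_castSucc]
    rw [key, map_mul, sign_finRotate, Equiv.Perm.sign_extendDomain, ih,
      Finset.sum_range_succ, pow_add, mul_comm, Nat.add_sub_cancel]

private lemma reflect_prod' {ι : Type*} (s : Finset ι) (c : ι → ℂ) :
    reflect s.card (∏ l ∈ s, (X - C (c l))) = ∏ l ∈ s, (1 - C (c l) * X) := by
  induction s using Finset.cons_induction with
  | empty => simp
  | cons a s ha ih =>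
    rw [Finset.prod_cons, Finset.prod_cons, Finset.card_cons, ← ih]
    have h1 : (X - C (c a)).natDegree ≤ 1 := le_of_eq (natDegree_X_sub_C _)
    have h2 : (∏ l ∈ s, (X - C (c l))).natDegree ≤ s.card :=
      (natDegree_prod_le _ _).trans (le_of_eq (by simp [natDegree_X_sub_C]))
    rw [show s.card + 1 = 1 + s.card by omega,
      reflect_mul (X - C (c a)) (∏ l ∈ s, (X - C (c l))) h1 h2]
    congr 1
    rw [reflect_sub, reflect_C]
    simp [reflect_one_X]

theorem cauchy_determinant_identity (n : ℕ) (a b : Fin n → ℂ)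
    (h : ∀ j k, a j * b k ≠ 1) :
    Matrix.det (Matrix.of fun j k : Fin n => (1 - a j * b k)⁻¹) =
      (∏ j : Fin n, ∏ k ∈ univ.filter (fun k => j < k), (a k - a j)) *
      (∏ j : Fin n, ∏ k ∈ univ.filter (fun k => j < k), (b k - b j)) *
      ∏ j : Fin n, ∏ k : Fin n, (1 - a j * b k)⁻¹ := by
  have hfilter : ∀ (v : Fin n → ℂ),
      (∏ j : Fin n, ∏ k ∈ univ.filter (fun k => j < k), (v k - v j)) =
      ∏ j : Fin n, ∏ k ∈ Ioi j, (v k - v j) := by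
    intro v
    refine Finset.prod_congr rfl fun j _ => Finset.prod_congr ?_ fun _ _ => rfl
    ext x; simp
  rw [hfilter a, hfilter b]
  rcases Nat.eq_zero_or_pos n with hn | hn
  · subst hn; simp
  by_cases hbinj : Function.Injective b
  swap
  · rw [Function.not_injective_iff] at hbinj
    obtain ⟨j, k, hbe, hjk⟩ := hbinj
    have hL : Matrix.det (Matrix.of fun j k : Fin n => (1 - a j * b k)⁻¹) = 0 := by
      refine Matrix.det_zero_of_column_eq hjk fun i => ?_
      simp [hbe]
    have hR : (∏ j : Fin n, ∏ k ∈ Ioi j, (b k - b j)) = 0 := by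
      rcases Ne.lt_or_gt hjk with hlt | hlt
      · refine Finset.prod_eq_zero (mem_univ j) (Finset.prod_eq_zero (mem_Ioi.mpr hlt) ?_)
        rw [hbe, sub_self]
      · refine Finset.prod_eq_zero (mem_univ k) (Finset.prod_eq_zero (mem_Ioi.mpr hlt) ?_)
        rw [hbe, sub_self]
    rw [hL, hR]; ring
  -- main case
  have hfac : ∀ (j k : Fin n), (1 - a j * b k) ≠ 0 := fun j k =>
    sub_ne_zero.mpr fun e => h j k e.symm
  set q : Fin n → ℂ[X] := fun k => ∏ l ∈ univ.erase k, (X - C (b l)) with hq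
  set p : Fin n → ℂ[X] := fun k => ∏ l ∈ univ.erase k, (1 - C (b l) * X) with hp
  have hcard : ∀ k : Fin n, (univ.erase k).card = n - 1 := by
    intro k; rw [Finset.card_erase_of_mem (mem_univ k)]; simp
  have hrefl : ∀ k : Fin n, reflect (n-1) (q k) = p k := by
    intro k; rw [hq, hp, ← hcard k]; exact reflect_prod' _ _
  have hcoeff : ∀ (k i : Fin n), (p k).coeff i = (q k).coeff ((Fin.rev i : Fin n) : ℕ) := by
    intro k i
    rw [← hrefl k, coeff_reflect, revAt_le (by omega : (i:ℕ) ≤ n - 1)]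
    congr 1
    rw [Fin.val_rev]; omega
  have hqdeg : ∀ k : Fin n, (q k).natDegree < n := by
    intro k
    refine lt_of_le_of_lt ((natDegree_prod_le _ _).trans ?_) (by omega : n - 1 < n)
    refine le_of_eq ?_
    rw [Finset.sum_congr rfl fun l _ => natDegree_X_sub_C (b l), Finset.sum_const,
      smul_eq_mul, mul_one, hcard]
  have hpdeg : ∀ k : Fin n, (p k).natDegree < n := by
    intro k
    refine lt_of_le_of_lt ((natDegree_prod_le _ _).trans ?_) (by omega : n - 1 < n)
    calc ∑ l ∈ univ.erase k, (1 - C (b l) * X).natDegree ≤ ∑ l ∈ univ.erase k, 1 := by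
          refine Finset.sum_le_sum fun l _ => ?_
          refine (natDegree_sub_le _ _).trans ?_
          simpa using (natDegree_C_mul_le (b l) X).trans (le_of_eq natDegree_X)
      _ = n - 1 := by rw [Finset.sum_const, smul_eq_mul, mul_one, hcard]
  set E : Matrix (Fin n) (Fin n) ℂ := Matrix.of fun m k : Fin n => (p k).coeff m with hE
  set M : Matrix (Fin n) (Fin n) ℂ :=
    Matrix.of fun j k : Fin n => ∏ l ∈ univ.erase k, (1 - a j * b l) with hM
  set W : Matrix (Fin n) (Fin n) ℂ :=
    Matrix.of fun j i : Fin n => b j ^ ((Fin.rev i : Fin n) : ℕ) with hW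
  set d : Fin n → ℂ := fun k => ∏ l ∈ univ.erase k, (b k - b l) with hd
  set P : Fin n → ℂ := fun j => ∏ k, (1 - a j * b k) with hP
  have hMne : ∀ j k, M j k ≠ 0 := by
    intro j k
    show (∏ l ∈ univ.erase k, (1 - a j * b l)) ≠ 0
    exact Finset.prod_ne_zero_iff.mpr fun l _ => hfac j l
  -- Step 1 : factor out rows
  have step1 : Matrix.det (Matrix.of fun j k : Fin n => (1 - a j * b k)⁻¹) =
      (∏ j, (P j)⁻¹) * M.det := by
    rw [← Matrix.det_mul_column]
    congr 1
    ext j k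
    simp only [Matrix.of_apply]
    have hsplit : P j = (1 - a j * b k) * M j k := by
      rw [hP, hM]; exact (Finset.mul_prod_erase univ _ (mem_univ k)).symm
    rw [hsplit, mul_inv, mul_assoc, inv_mul_cancel₀ (hMne j k), mul_one]
  -- Step 2 : M = vandermonde a * E
  have step2 : M = Matrix.vandermonde a * E := by
    ext j k
    rw [Matrix.mul_apply]
    have heval : (p k).eval (a j) = M j k := by
      rw [hp, hM, eval_prod]
      simp only [Matrix.of_apply]
      refine Finset.prod_congr rfl fun l _ => ?_
      simp only [eval_sub, eval_one, eval_mul, eval_C, eval_X, mul_comm (b l) (a j)]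
    rw [← heval, eval_eq_sum_range' (hpdeg k) (a j), ← Fin.sum_univ_eq_sum_range]
    refine Finset.sum_congr rfl fun m _ => ?_
    rw [Matrix.vandermonde_apply, mul_comm]
    rfl
  -- Step 3 : W * E = diagonal d
  have step3 : W * E = Matrix.diagonal d := by
    ext j k
    rw [Matrix.mul_apply]
    have h1 : ∑ i : Fin n, W j i * E i k =
        ∑ i : Fin n, (q k).coeff ((Fin.rev i : Fin n) : ℕ) * b j ^ ((Fin.rev i : Fin n) : ℕ) := by
      refine Finset.sum_congr rfl fun i _ => ?_
      rw [hW, hE]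
      simp only [Matrix.of_apply]
      rw [hcoeff k i, mul_comm]
    have h2 : ∑ i : Fin n, (q k).coeff ((Fin.rev i : Fin n) : ℕ) * b j ^ ((Fin.rev i : Fin n) : ℕ)
        = ∑ m : Fin n, (q k).coeff (m : ℕ) * b j ^ (m : ℕ) :=
      Fintype.sum_bijective Fin.rev Fin.rev_bijective _ _ (fun i => rfl)
    rw [h1, h2, Fin.sum_univ_eq_sum_range (fun m => (q k).coeff m * b j ^ m) n,
      ← eval_eq_sum_range' (hqdeg k) (b j)]
    rw [hq, eval_prod]
    simp only [eval_sub, eval_X, eval_C]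
    by_cases hjk : j = k
    · subst hjk
      rw [Matrix.diagonal_apply_eq, hd]
    · rw [Matrix.diagonal_apply_ne _ hjk]
      exact Finset.prod_eq_zero (Finset.mem_erase.mpr ⟨hjk, mem_univ j⟩) (sub_self _)
  -- Step 4 : det W
  have step4 : W.det = ((Equiv.Perm.sign (Fin.revPerm : Equiv.Perm (Fin n)) : ℤ) : ℂ) *
      ∏ i : Fin n, ∏ j ∈ Ioi i, (b j - b i) := by
    have hsub : W = (Matrix.vandermonde b).submatrix id Fin.revPerm := by
      ext j i; rfl
    rw [hsub, Matrix.det_permute', Matrix.det_vandermonde]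
  -- Step 5 : product of d
  have hsumIoi : ∑ i : Fin n, (Ioi i).card = ∑ i ∈ range n, i := by
    simp only [Fin.card_Ioi]
    rw [Fin.sum_univ_eq_sum_range (fun i => n - 1 - i) n]
    have := Finset.sum_range_reflect (fun i => i) n
    simpa using this
  have e1 : ∀ i : Fin n, (∏ j ∈ Ioi i, ((b i - b j) * (b j - b i))) =
      (-1 : ℂ) ^ (Ioi i).card * ∏ j ∈ Ioi i, (b j - b i) ^ 2 := by
    intro i
    rw [← Finset.prod_const, ← Finset.prod_mul_distrib]
    exact Finset.prod_congr rfl fun j _ => by ring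
  have step5 : ∏ k, d k = (-1) ^ (∑ i ∈ range n, i) *
      (∏ i : Fin n, ∏ j ∈ Ioi i, (b j - b i)) ^ 2 := by
    have key := Finset.prod_prod_Ioi_mul_eq_prod_prod_off_diag (fun x y : Fin n => b y - b x)
    have key' : ∏ i : Fin n, ∏ j ∈ Ioi i, ((b i - b j) * (b j - b i)) = ∏ k, d k := by
      rw [key]
      refine Finset.prod_congr rfl fun k _ => ?_
      rw [hd]
      refine Finset.prod_congr ?_ fun _ _ => rfl
      ext x; simp
    calc ∏ k, d k
        = ∏ i : Fin n, ∏ j ∈ Ioi i, ((b i - b j) * (b j - b i)) := key'.symm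
      _ = ∏ i : Fin n, ((-1 : ℂ) ^ (Ioi i).card * ∏ j ∈ Ioi i, (b j - b i) ^ 2) :=
          Finset.prod_congr rfl fun i _ => e1 i
      _ = (-1) ^ (∑ i ∈ range n, i) * (∏ i : Fin n, ∏ j ∈ Ioi i, (b j - b i)) ^ 2 := by
          rw [Finset.prod_mul_distrib, Finset.prod_pow_eq_pow_sum, hsumIoi]
          congr 1
          rw [← Finset.prod_pow]
          exact Finset.prod_congr rfl fun i _ => Finset.prod_pow _ _ _
  -- Step 6 : det E
  have hVb : (∏ i : Fin n, ∏ j ∈ Ioi i, (b j - b i)) ≠ 0 := by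
    rw [← Matrix.det_vandermonde]
    exact Matrix.det_vandermonde_ne_zero_iff.mpr hbinj
  have hsign : ((Equiv.Perm.sign (Fin.revPerm : Equiv.Perm (Fin n)) : ℤ) : ℂ) =
      (-1) ^ (∑ i ∈ range n, i) := by
    rw [sign_revPerm']
    push_cast
    ring
  have hdetE : E.det = ∏ i : Fin n, ∏ j ∈ Ioi i, (b j - b i) := by
    have h5 : W.det * E.det = ∏ k, d k := by
      rw [← Matrix.det_mul, step3, Matrix.det_diagonal]
    rw [step4, hsign, step5, mul_assoc] at h5
    have hpow : ((-1 : ℂ)) ^ (∑ i ∈ range n, i) ≠ 0 := pow_ne_zero _ (by norm_num)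
    have h6 := mul_left_cancel₀ hpow h5
    have h7 := mul_left_cancel₀ hVb (h6.trans (sq _))
    exact h7
  -- conclusion
  rw [step1, step2, Matrix.det_mul, Matrix.det_vandermonde, hdetE]
  have hPinv : (∏ j, (P j)⁻¹) = ∏ j : Fin n, ∏ k : Fin n, (1 - a j * b k)⁻¹ :=
    Finset.prod_congr rfl fun j _ => by rw [hP, ← Finset.prod_inv_distrib]
  rw [hPinv]
  ring
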